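/- Let ψ ∈ Ω_b be continuously differentiable on (0,∞) with ψ(t) = ∫₀^t ψ'(s) ds for all t ≥ 0, and suppose that for every ε ∈ (0,1) there exists C > 0 such that ψ(t) ≤ C·t^ε for all t > 1. Then ψ' ∈ L^p((0,∞)) for every p > 1, while ∫₀^∞ ψ'(t) dt = ∞ (so ψ' ∉ L¹((0,∞))). -/

import Mathlib

open Filter Set Topology MeasureTheory

set_option maxHeartbeats 1000000 in
/-- Let `ψ ∈ Ω_b` be continuously differentiable on `(0,∞)` with
`ψ t = ∫₀^t ψ'`, and suppose for every `ε ∈ (0,1)` there is `C > 0` with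
`ψ t ≤ C t^ε` for all `t > 1`. Then `ψ' ∈ L^p((0,∞))` for every `p > 1`, while
`∫₀^∞ ψ' = ∞`, i.e. `ψ' ∉ L¹((0,∞))`. -/
theorem stmt7
    (ψ ψ' : ℝ → ℝ)
    (hmono : MonotoneOn ψ (Set.Ici 0))
    (hconc : ConcaveOn ℝ (Set.Ici 0) ψ)
    (hzero : ψ 0 = 0)
    (hnonneg : ∀ t ≥ (0:ℝ), 0 ≤ ψ t)
    (htop : Tendsto ψ atTop atTop)
    (hOb : ∃ C > (0:ℝ), ∀ t ∈ Set.Ioc (0:ℝ) 1, ψ t ≤ C * t)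
    (hderiv : ∀ t ∈ Set.Ioi (0:ℝ), HasDerivAt ψ (ψ' t) t)
    (hcont : ContinuousOn ψ' (Set.Ioi 0))
    (hfund : ∀ t ≥ (0:ℝ), ψ t = ∫ s in (0:ℝ)..t, ψ' s)
    (hweak : ∀ ε ∈ Set.Ioo (0:ℝ) 1, ∃ C > (0:ℝ), ∀ t > (1:ℝ), ψ t ≤ C * t ^ ε) :
    (∀ p : ℝ, 1 < p →
      MemLp ψ' (ENNReal.ofReal p) (volume.restrict (Set.Ioi (0:ℝ)))) ∧
    (∫⁻ t in Set.Ioi (0:ℝ), ENNReal.ofReal (ψ' t)) = ⊤ ∧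
    ¬ MemLp ψ' 1 (volume.restrict (Set.Ioi (0:ℝ))) := by
  classical
  -- ψ' is nonnegative on (0,∞)
  have hψ'nn : ∀ t ∈ Set.Ioi (0:ℝ), 0 ≤ ψ' t := by
    intro t ht
    have ht0 : (0:ℝ) < t := ht
    have h := hconc.slope_le_of_hasDerivAt (x := t) (y := t + 1)
      (mem_Ici.mpr ht0.le) (mem_Ici.mpr (by linarith)) (by linarith) (hderiv t ht)
    rw [slope_def_field] at h
    have hm : ψ t ≤ ψ (t + 1) :=
      hmono (mem_Ici.mpr ht0.le) (mem_Ici.mpr (by linarith)) (by linarith)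
    have he : t + 1 - t = 1 := by ring
    rw [he, div_one] at h
    linarith
  -- ψ'(t) ≤ ψ(t)/t on (0,∞)
  have hub : ∀ t ∈ Set.Ioi (0:ℝ), ψ' t ≤ ψ t / t := by
    intro t ht
    have ht0 : (0:ℝ) < t := ht
    have h := hconc.le_slope_of_hasDerivAt (x := 0) (y := t)
      (mem_Ici.mpr le_rfl) (mem_Ici.mpr ht0.le) ht0 (hderiv t ht)
    rw [slope_def_field] at h
    simpa [hzero] using h
  have hmeas : AEStronglyMeasurable ψ' (volume.restrict (Set.Ioi (0:ℝ))) :=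
    hcont.aestronglyMeasurable measurableSet_Ioi
  obtain ⟨C₀, hC₀pos, hC₀⟩ := hOb
  -- Part 2: the lintegral is infinite
  have key : ∀ M : ℝ, ENNReal.ofReal M ≤ ∫⁻ t in Set.Ioi (0:ℝ), ENNReal.ofReal (ψ' t) := by
    intro M
    obtain ⟨T, hTM, hT0⟩ := ((htop.eventually_ge_atTop M).and (eventually_gt_atTop 0)).exists
    have hψT : ψ T = ∫ s in Set.Ioc (0:ℝ) T, ψ' s := by
      rw [hfund T hT0.le, intervalIntegral.integral_of_le hT0.le]
    calc ENNReal.ofReal M ≤ ENNReal.ofReal (ψ T) := ENNReal.ofReal_le_ofReal hTM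
      _ ≤ (‖ψ T‖₊ : ENNReal) := Real.ofReal_le_enorm _
      _ = (‖∫ s in Set.Ioc (0:ℝ) T, ψ' s‖₊ : ENNReal) := by rw [hψT]
      _ ≤ ∫⁻ s in Set.Ioc (0:ℝ) T, (‖ψ' s‖₊ : ENNReal) :=
          enorm_integral_le_lintegral_enorm _
      _ = ∫⁻ s in Set.Ioc (0:ℝ) T, ENNReal.ofReal (ψ' s) := by
          refine setLIntegral_congr_fun measurableSet_Ioc (fun s hs => ?_)
          exact Real.enorm_eq_ofReal (hψ'nn s hs.1)
      _ ≤ ∫⁻ t in Set.Ioi (0:ℝ), ENNReal.ofReal (ψ' t) :=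
          lintegral_mono' (Measure.restrict_mono Set.Ioc_subset_Ioi_self le_rfl) le_rfl
  have htopI : (∫⁻ t in Set.Ioi (0:ℝ), ENNReal.ofReal (ψ' t)) = ⊤ := by
    by_contra h
    set I := ∫⁻ t in Set.Ioi (0:ℝ), ENNReal.ofReal (ψ' t) with hI
    have h1 : ENNReal.ofReal (I.toReal + 1) ≤ ENNReal.ofReal I.toReal := by
      have := key (I.toReal + 1)
      rwa [ENNReal.ofReal_toReal h]
    have h2 := (ENNReal.ofReal_le_ofReal_iff ENNReal.toReal_nonneg).mp h1
    linarith
  -- Part 3: not in L¹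
  have hnot : ¬ MemLp ψ' 1 (volume.restrict (Set.Ioi (0:ℝ))) := by
    intro h
    rw [memLp_one_iff_integrable] at h
    have h2 : (∫⁻ t in Set.Ioi (0:ℝ), (‖ψ' t‖₊ : ENNReal)) < ⊤ := h.2
    have hle : (∫⁻ t in Set.Ioi (0:ℝ), ENNReal.ofReal (ψ' t))
        ≤ ∫⁻ t in Set.Ioi (0:ℝ), (‖ψ' t‖₊ : ENNReal) :=
      lintegral_mono fun t => Real.ofReal_le_enorm _
    rw [htopI] at hle
    exact absurd (lt_of_le_of_lt hle h2) (lt_irrefl _)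
  -- Part 1: MemLp for all p > 1
  refine ⟨fun p hp => ?_, htopI, hnot⟩
  have hp0 : 0 < p := lt_trans one_pos hp
  set q : ENNReal := ENNReal.ofReal p with hq
  have hq0 : q ≠ 0 := by
    simp only [hq, ne_eq, ENNReal.ofReal_eq_zero, not_le]; linarith
  have hqt : q ≠ ⊤ := ENNReal.ofReal_ne_top
  have hqr : q.toReal = p := ENNReal.toReal_ofReal hp0.le
  -- choose ε
  set ε : ℝ := (1 - 1/p)/2 with hε
  have hpinv : 1/p < 1 := by
    rw [div_lt_one hp0]; exact hp
  have hpinv0 : 0 < 1/p := by positivity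
  have hε0 : 0 < ε := by rw [hε]; linarith
  have hε1 : ε < 1 := by rw [hε]; linarith
  obtain ⟨C₁, hC₁pos, hC₁⟩ := hweak ε ⟨hε0, hε1⟩
  have hexp : (ε - 1) * p < -1 := by
    have hεe : (ε - 1) * p = -(p + 1)/2 := by
      rw [hε]; field_simp; ring
    rw [hεe]; linarith
  -- measurability of |ψ'|^p
  have hgcont : ContinuousOn (fun t => ‖ψ' t‖ ^ p) (Set.Ioi (0:ℝ)) :=
    hcont.norm.rpow_const fun x _ => Or.inr hp0.le
  have hm1 : AEStronglyMeasurable (fun t => ‖ψ' t‖ ^ p)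
      (volume.restrict (Set.Ioc (0:ℝ) 1)) :=
    (hgcont.mono Set.Ioc_subset_Ioi_self).aestronglyMeasurable measurableSet_Ioc
  have hm2 : AEStronglyMeasurable (fun t => ‖ψ' t‖ ^ p)
      (volume.restrict (Set.Ioi (1:ℝ))) :=
    (hgcont.mono fun x (hx : x ∈ Set.Ioi (1:ℝ)) => (lt_trans one_pos hx : (0:ℝ) < x)).aestronglyMeasurable measurableSet_Ioi
  -- integrability near 0
  have hi1 : IntegrableOn (fun t => ‖ψ' t‖ ^ p) (Set.Ioc (0:ℝ) 1) := by
    apply Integrable.mono' (g := fun _ => C₀ ^ p)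
      (integrableOn_const measure_Ioc_lt_top.ne) hm1
    refine (ae_restrict_iff' measurableSet_Ioc).mpr (ae_of_all _ fun t ht => ?_)
    have ht0 : (0:ℝ) < t := ht.1
    have hnn := hψ'nn t ht0
    have h1 : ψ' t ≤ C₀ := by
      have hb := hub t ht0
      have h2 := hC₀ t ht
      have h3 : ψ t / t ≤ C₀ := by
        rw [div_le_iff₀ ht0]; linarith [h2, mul_comm C₀ t]
      linarith
    rw [Real.norm_eq_abs, abs_of_nonneg (Real.rpow_nonneg (norm_nonneg _) p)]
    apply Real.rpow_le_rpow (norm_nonneg _) _ hp0.le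
    rwa [Real.norm_eq_abs, abs_of_nonneg hnn]
  -- integrability near ∞
  have hi2 : IntegrableOn (fun t => ‖ψ' t‖ ^ p) (Set.Ioi (1:ℝ)) := by
    have hint : IntegrableOn (fun t => C₁ ^ p * t ^ ((ε - 1) * p)) (Set.Ioi (1:ℝ)) :=
      (integrableOn_Ioi_rpow_of_lt hexp one_pos).const_mul _
    apply Integrable.mono' hint hm2
    refine (ae_restrict_iff' measurableSet_Ioi).mpr (ae_of_all _ fun t ht => ?_)
    have ht1 : (1:ℝ) < t := ht
    have ht0 : (0:ℝ) < t := lt_trans one_pos ht1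
    have hnn := hψ'nn t ht0
    have hb : ψ' t ≤ C₁ * t ^ (ε - 1) := by
      have h1 := hub t ht0
      have h2 := hC₁ t ht1
      have h3 : ψ t / t ≤ (C₁ * t ^ ε) / t := by gcongr
      have h4 : (C₁ * t ^ ε) / t = C₁ * t ^ (ε - 1) := by
        rw [mul_div_assoc, Real.rpow_sub_one ht0.ne']
      linarith
    rw [Real.norm_eq_abs, abs_of_nonneg (Real.rpow_nonneg (norm_nonneg _) p)]
    calc ‖ψ' t‖ ^ p = ψ' t ^ p := by rw [Real.norm_eq_abs, abs_of_nonneg hnn]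
      _ ≤ (C₁ * t ^ (ε - 1)) ^ p := Real.rpow_le_rpow hnn hb hp0.le
      _ = C₁ ^ p * (t ^ (ε - 1)) ^ p :=
          Real.mul_rpow hC₁pos.le (Real.rpow_nonneg ht0.le _)
      _ = C₁ ^ p * t ^ ((ε - 1) * p) := by rw [← Real.rpow_mul ht0.le]
  have hi : IntegrableOn (fun t => ‖ψ' t‖ ^ p) (Set.Ioi (0:ℝ)) := by
    have h := hi1.union hi2
    rwa [Set.Ioc_union_Ioi_eq_Ioi (by norm_num : (0:ℝ) ≤ 1)] at h
  have hiff := memLp_norm_rpow_iff (p := q) (q := q) hmeas hq0 hqt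
  rw [ENNReal.div_self hq0 hqt, hqr] at hiff
  exact hiff.mp (memLp_one_iff_integrable.mpr hi)
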